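/- Let t ≥ 1 and let f be a boolean function on finitely many variables that is computed by some t-clipped decision tree. Then for every real p with 0 ≤ p ≤ 1, every integer d ≥ 0, and a random p-restriction ρ, the probability that the restricted function f|_ρ requires decision-tree depth at least d is at most (4·p·2^t)^d, i.e. Pr_ρ[DT_depth(f|_ρ) ≥ d] ≤ (4p2^t)^d. -/

import Mathlib

/-! ## Decision trees -/

/-- Binary decision trees over a variable index type `ι`.  An internal vertex
`node i t0 t1` queries variable `i`; the `0`-edge leads to `t0`, the `1`-edge to `t1`. -/
inductive DTree (ι : Type) : Type where
  | leaf : Bool → DTree ι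
  | node : ι → DTree ι → DTree ι → DTree ι

namespace DTree

variable {ι : Type}

/-- Evaluate a decision tree on an input. -/
def eval : DTree ι → (ι → Bool) → Bool
  | leaf b, _ => b
  | node i t0 t1, x => if x i then t1.eval x else t0.eval x

/-- Depth: the number of edges on the longest root-to-leaf path. -/
def depth : DTree ι → ℕ
  | leaf _ => 0
  | node _ t0 t1 => max t0.depth t1.depth + 1

/-- Distance from the root to the closest leaf. -/
def minLeafDepth : DTree ι → ℕ
  | leaf _ => 0
  | node _ t0 t1 => min t0.minLeafDepth t1.minLeafDepth + 1

/-- A tree is `t`-clipped if every vertex is within distance `t` of some leaf. -/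
def Clipped (t : ℕ) : DTree ι → Prop
  | leaf _ => True
  | node _ t0 t1 =>
      min t0.minLeafDepth t1.minLeafDepth + 1 ≤ t ∧ Clipped t t0 ∧ Clipped t t1

/-- No variable in `seen` (nor any variable already queried above) is queried again:
this captures "no variable appears more than once on any root-to-leaf path". -/
def ReadOnceFrom : List ι → DTree ι → Prop
  | _, leaf _ => True
  | seen, node i t0 t1 =>
      i ∉ seen ∧ ReadOnceFrom (i :: seen) t0 ∧ ReadOnceFrom (i :: seen) t1

/-- No variable appears more than once on any root-to-leaf path. -/
def ReadOnce (T : DTree ι) : Prop := T.ReadOnceFrom []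

/-- `T` computes the boolean function `f`. -/
def Computes (T : DTree ι) (f : (ι → Bool) → Bool) : Prop := ∀ x, T.eval x = f x

/-- The list of all variables labelling internal vertices of the tree. -/
def nodeVars : DTree ι → List ι
  | leaf _ => []
  | node i t0 t1 => i :: (t0.nodeVars ++ t1.nodeVars)

/-- The tree has some leaf labelled `b`. -/
def HasLeaf (b : Bool) : DTree ι → Prop
  | leaf c => c = b
  | node _ t0 t1 => HasLeaf b t0 ∨ HasLeaf b t1

/-- From every internal vertex there is a path to a leaf labelled 0 (`false`)
and a path to a leaf labelled 1 (`true`). -/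
def EverySplit : DTree ι → Prop
  | leaf _ => True
  | node _ t0 t1 =>
      (HasLeaf true t0 ∨ HasLeaf true t1) ∧ (HasLeaf false t0 ∨ HasLeaf false t1) ∧
        EverySplit t0 ∧ EverySplit t1

/-- Variable `y` labels some internal vertex at distance `d` (edges) from the root. -/
def OccursAt (y : ι) : ℕ → DTree ι → Prop
  | _, leaf _ => False
  | 0, node i _ _ => i = y
  | d + 1, node _ t0 t1 => OccursAt y d t0 ∨ OccursAt y d t1

end DTree

/-- `DTdepth f` is the minimum depth of a decision tree computing `f`. -/
noncomputable def DTdepth {ι : Type} (f : (ι → Bool) → Bool) : ℕ :=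
  sInf {d | ∃ T : DTree ι, T.ReadOnce ∧ T.Computes f ∧ T.depth ≤ d}

/-! ## Restrictions -/

/-- The function obtained by fixing each variable `i` with `ρ i = some b` to `b`
(variables with `ρ i = none`, i.e. assigned `*`, are left free). -/
def restrictFun {ι : Type} (f : (ι → Bool) → Bool) (ρ : ι → Option Bool) :
    (ι → Bool) → Bool :=
  fun x => f (fun i => (ρ i).getD (x i))

open Classical in
/-- The probability of the event `E` under a random `p`-restriction: each variable
independently gets `*` (i.e. `none`) with probability `p`, and each of the values
`0`, `1` with probability `(1-p)/2`. -/
noncomputable def restrProb {ι : Type} [Fintype ι] [DecidableEq ι] (p : ℝ)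
    (E : (ι → Option Bool) → Prop) : ℝ :=
  ∑ ρ : ι → Option Bool,
    (if E ρ then ∏ i : ι, (if ρ i = none then p else (1 - p) / 2) else 0)

/-! ## Tree tribes -/

/-- The variable index type of the complete `t`-clipped tree `W_t(r)` on `r` levels:
the first block `v_1, …, v_t`, plus, for each `k < t`, a fresh copy of the variables
of `W_t(r-1)` hanging off the 1-edge of `v_{k+1}`. -/
def XiVars (t : ℕ) : ℕ → Type
  | 0 => Empty
  | r + 1 => Fin t ⊕ (Fin t × XiVars t r)

instance XiVars.instFintype (t : ℕ) : ∀ r, Fintype (XiVars t r)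
  | 0 => inferInstanceAs (Fintype Empty)
  | r + 1 =>
      letI := XiVars.instFintype t r
      inferInstanceAs (Fintype (Fin t ⊕ (Fin t × XiVars t r)))

instance XiVars.instDecidableEq (t : ℕ) : ∀ r, DecidableEq (XiVars t r)
  | 0 => inferInstanceAs (DecidableEq Empty)
  | r + 1 =>
      letI := XiVars.instDecidableEq t r
      inferInstanceAs (DecidableEq (Fin t ⊕ (Fin t × XiVars t r)))

/-- The `t`-clipped xor tree tribe `Ξ_t(r)`: the function computed by `W_t(r)` with
each leaf labelled by the parity of the edge labels on its root-to-leaf path.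
Following the 0-edges `v_1 → v_2 → ⋯` until the first variable with value 1 (if any),
whose 1-edge leads to a fresh copy computing the negation of `Ξ_t(r-1)`. -/
def Xi (t : ℕ) : ∀ r, (XiVars t r → Bool) → Bool
  | 0, _ => false
  | r + 1, x =>
      match (List.finRange t).find? (fun i => x (Sum.inl i)) with
      | none => false
      | some k => ! Xi t r (fun v => x (Sum.inr (k, v)))

namespace XiVars

/-- The list of 1-branch positions (0-indexed within each block) taken on the path
from the root to the block containing the given variable. -/
def branches {t : ℕ} : ∀ {r : ℕ}, XiVars t r → List (Fin t)
  | 0, v => nomatch v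
  | _ + 1, Sum.inl _ => []
  | _ + 1, Sum.inr (k, w) => k :: branches w

/-- The (0-indexed) position of the variable within its block. -/
def pos {t : ℕ} : ∀ {r : ℕ}, XiVars t r → Fin t
  | 0, v => nomatch v
  | _ + 1, Sum.inl i => i
  | _ + 1, Sum.inr (_, w) => pos w

/-- The level of a variable: the recursive step at which it was added (level 1 is the
outermost block). -/
def level {t r : ℕ} (v : XiVars t r) : ℕ := (branches v).length + 1

/-- The distance (number of edges) from the root of `W_t(r)` to the vertex of `v`. -/
def rootDist {t r : ℕ} (v : XiVars t r) : ℕ :=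
  ((branches v).map (fun b => (b : ℕ) + 1)).sum + (pos v : ℕ)

/-- The distance from the vertex of `v` to the closest leaf of `W_t(r)`. -/
def leafDist {t r : ℕ} (v : XiVars t r) : ℕ :=
  min (t - (pos v : ℕ)) (1 + min t (r - level v))

/-- A root-to-leaf path of `W_t(r)` is determined by the list `L` of 1-branch positions
it takes (with `L.length ≤ r`); `v.onPath L` says the vertex of `v` lies on that path. -/
def onPath {t r : ℕ} (v : XiVars t r) (L : List (Fin t)) : Prop :=
  branches v = L ∨
    (branches v <+: L ∧ branches v ≠ L ∧
      ∃ b : Fin t, L[(branches v).length]? = some b ∧ pos v ≤ b)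

end XiVars

/-- For `t = 1`, `Ξ_1(n)` is computed by a path on `n` variables: vertex `x_i` has a
0-edge to a leaf and a 1-edge to `x_{i+1}`, leaves labelled by the parity of the edge
labels from the root. -/
def Xi1 : ∀ n, (Fin n → Bool) → Bool
  | 0, _ => false
  | n + 1, x => if x 0 then ! Xi1 n (fun i => x i.succ) else false

/-! ## Fourier coefficients -/

/-- The Fourier coefficient `f̂_S` of a boolean function, viewed as a function
`{−1,1}^n → {−1,1}` via the identification `false ↔ +1`, `true ↔ −1`:
`f̂_S = E_x[f(x) ∏_{i ∈ S} x_i]` over a uniformly random input. -/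
noncomputable def fourierCoeffB {ι : Type} [Fintype ι] [DecidableEq ι]
    (f : (ι → Bool) → Bool) (S : Finset ι) : ℝ :=
  (∑ x : ι → Bool,
      (if f x then (-1 : ℝ) else 1) * ∏ i ∈ S, (if x i then (-1 : ℝ) else 1)) /
    2 ^ Fintype.card ι

/-- The `i`-th Jacobsthal number `J_i = (2^i − (−1)^i)/3`, as a real number. -/
noncomputable def jacobsthal (i : ℕ) : ℝ := (2 ^ i - (-1) ^ i) / 3

/-- The parity (mod-2 sum) of all the bits of `x`. -/
def parityBool {ι : Type} [Fintype ι] [DecidableEq ι] (x : ι → Bool) : Bool :=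
  decide ((Finset.univ.filter fun i => x i = true).card % 2 = 1)

/-! ## The probabilities `P_0(r)`, `P_1(r)` and `γ_d(r)` -/

/-- `P_0(r)`: the probability that `Ξ_t(r)` restricted by a random `p`-restriction is
the identically-`0` function. -/
noncomputable def Pzero (t : ℕ) (p : ℝ) (r : ℕ) : ℝ :=
  restrProb p (fun ρ : XiVars t r → Option Bool => ∀ x, restrictFun (Xi t r) ρ x = false)

/-- `P_1(r)`: the probability that `Ξ_t(r)` restricted by a random `p`-restriction is
the identically-`1` function. -/
noncomputable def Pone (t : ℕ) (p : ℝ) (r : ℕ) : ℝ :=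
  restrProb p (fun ρ : XiVars t r → Option Bool => ∀ x, restrictFun (Xi t r) ρ x = true)

/-- `γ_d(r) = Pr_ρ[DT_depth(Ξ_t(r)|_ρ) ≥ d]` for a random `p`-restriction `ρ`. -/
noncomputable def gammaDT (t : ℕ) (p : ℝ) (d r : ℕ) : ℝ :=
  restrProb p (fun ρ : XiVars t r → Option Bool => d ≤ DTdepth (restrictFun (Xi t r) ρ))

/-! ## The polynomial sequences `P_0(r), P_1(r) ∈ ℝ[p]` -/

/-- The polynomial `q = (1 − p)/2 ∈ ℝ[p]`. -/
noncomputable def qP : Polynomial ℝ := Polynomial.C (1 / 2) * (1 - Polynomial.X)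

/-- The pair of polynomials `(P_0(r), P_1(r)) ∈ ℝ[p] × ℝ[p]`, defined by
`P_0(1) = q^t`, `P_1(1) = 1 − (1−q)^t`, and for `r ≥ 2`, with `U = P_1(r−1)` and
`V = P_0(r−1)`: `P_0(r) = q·U·∑_{k=0}^{t−1}(q+pU)^k + (q+pU)^t` and
`P_1(r) = q·V·∑_{k=0}^{t−1}(q+pV)^k`.  (The value at `r = 0` is junk.) -/
noncomputable def PP (t : ℕ) : ℕ → Polynomial ℝ × Polynomial ℝ
  | 0 => (1, 0)
  | 1 => (qP ^ t, 1 - (1 - qP) ^ t)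
  | r + 2 =>
      (qP * (PP t (r + 1)).2 *
          (∑ k ∈ Finset.range t, (qP + Polynomial.X * (PP t (r + 1)).2) ^ k) +
        (qP + Polynomial.X * (PP t (r + 1)).2) ^ t,
       qP * (PP t (r + 1)).1 *
          (∑ k ∈ Finset.range t, (qP + Polynomial.X * (PP t (r + 1)).1) ^ k))

/-- The polynomial `P_0(r) ∈ ℝ[p]`. -/
noncomputable def P0poly (t r : ℕ) : Polynomial ℝ := (PP t r).1

/-- The polynomial `P_1(r) ∈ ℝ[p]`. -/
noncomputable def P1poly (t r : ℕ) : Polynomial ℝ := (PP t r).2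

/-! ## Auxiliary machinery for the proof -/

namespace DTree

variable {ι : Type}

/-- The restriction of a decision tree: fixed variables are contracted. -/
def restrict : DTree ι → (ι → Option Bool) → DTree ι
  | leaf b, _ => leaf b
  | node i t0 t1, ρ =>
      match ρ i with
      | none => node i (t0.restrict ρ) (t1.restrict ρ)
      | some false => t0.restrict ρ
      | some true => t1.restrict ρ

lemma eval_restrict (T : DTree ι) (ρ : ι → Option Bool) (x : ι → Bool) :
    (T.restrict ρ).eval x = T.eval (fun j => (ρ j).getD (x j)) := by
  induction T with
  | leaf b => rfl
  | node i t0 t1 ih0 ih1 =>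
    rcases hv : ρ i with _ | b
    · simp [restrict, hv, eval, ih0, ih1]
    · cases b <;> simp [restrict, hv, eval, ih0, ih1]

lemma readOnceFrom_sub :
    ∀ {T : DTree ι} {s s' : List ι}, s ⊆ s' → T.ReadOnceFrom s' → T.ReadOnceFrom s := by
  intro T
  induction T with
  | leaf b => intro s s' _ _; trivial
  | node i t0 t1 ih0 ih1 =>
    intro s s' hs h
    obtain ⟨hi, h0, h1⟩ := h
    exact ⟨fun hmem => hi (hs hmem), ih0 (List.cons_subset_cons i hs) h0,
      ih1 (List.cons_subset_cons i hs) h1⟩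

lemma readOnceFrom_restrict (ρ : ι → Option Bool) :
    ∀ {T : DTree ι} {s : List ι}, T.ReadOnceFrom s → (T.restrict ρ).ReadOnceFrom s := by
  intro T
  induction T with
  | leaf b => intro s _; trivial
  | node i t0 t1 ih0 ih1 =>
    intro s h
    obtain ⟨hi, h0, h1⟩ := h
    have hsub : s ⊆ i :: s := List.subset_cons_self i s
    rcases hv : ρ i with _ | b
    · simp only [restrict, hv]
      exact ⟨hi, ih0 h0, ih1 h1⟩
    · cases b
      · simp only [restrict, hv]
        exact ih0 (readOnceFrom_sub hsub h0)
      · simp only [restrict, hv]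
        exact ih1 (readOnceFrom_sub hsub h1)

lemma not_mem_nodeVars :
    ∀ {T : DTree ι} {s : List ι}, T.ReadOnceFrom s → ∀ j ∈ s, j ∉ T.nodeVars := by
  intro T
  induction T with
  | leaf b => intro s _ j _ h; simp [nodeVars] at h
  | node i t0 t1 ih0 ih1 =>
    intro s h j hj hmem
    obtain ⟨hi, h0, h1⟩ := h
    simp only [nodeVars, List.mem_cons, List.mem_append] at hmem
    rcases hmem with rfl | h | h
    · exact hi hj
    · exact ih0 h0 j (List.mem_cons_of_mem _ hj) h
    · exact ih1 h1 j (List.mem_cons_of_mem _ hj) h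

lemma restrict_update [DecidableEq ι] {i : ι} (c : Option Bool) (ρ : ι → Option Bool) :
    ∀ {T : DTree ι}, i ∉ T.nodeVars → T.restrict (Function.update ρ i c) = T.restrict ρ := by
  intro T
  induction T with
  | leaf b => intro _; rfl
  | node j t0 t1 ih0 ih1 =>
    intro hi
    simp only [nodeVars, List.mem_cons, List.mem_append] at hi
    push_neg at hi
    obtain ⟨hij, hi0, hi1⟩ := hi
    have hj : Function.update ρ i c j = ρ j := Function.update_of_ne (Ne.symm hij) c ρ
    rcases hv : ρ j with _ | b
    · simp only [restrict, hj, hv, ih0 hi0, ih1 hi1]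
    · cases b <;> simp only [restrict, hj, hv, ih0 hi0, ih1 hi1]

lemma minLeafDepth_le_of_clipped {t : ℕ} :
    ∀ {T : DTree ι}, T.Clipped t → T.minLeafDepth ≤ t
  | leaf _, _ => Nat.zero_le t
  | node _ _ _, h => h.1

lemma computes_restrict {T : DTree ι} {f : (ι → Bool) → Bool} (h : T.Computes f)
    (ρ : ι → Option Bool) : (T.restrict ρ).Computes (restrictFun f ρ) :=
  fun x => by rw [eval_restrict]; exact h _

end DTree

lemma DTdepth_le {ι : Type} {f : (ι → Bool) → Bool} {T : DTree ι}
    (h1 : T.ReadOnce) (h2 : T.Computes f) : DTdepth f ≤ T.depth :=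
  Nat.sInf_le ⟨T, h1, h2, le_rfl⟩

/-! ## Probability lemmas -/

section Prob

open Classical

variable {ι : Type} [Fintype ι] [DecidableEq ι]

/-- The weight of a single coordinate. -/
noncomputable def wOne (p : ℝ) (c : Option Bool) : ℝ := if c = none then p else (1 - p) / 2

lemma restrProb_eq (p : ℝ) (E : (ι → Option Bool) → Prop) :
    restrProb p E = ∑ ρ : ι → Option Bool,
      (if E ρ then ∏ i : ι, wOne p (ρ i) else 0) := rfl

lemma wOne_nonneg {p : ℝ} (hp0 : 0 ≤ p) (hp1 : p ≤ 1) (c : Option Bool) : 0 ≤ wOne p c := by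
  unfold wOne; split
  · exact hp0
  · linarith

lemma sum_wOne (p : ℝ) : ∑ c : Option Bool, wOne p c = 1 := by
  rw [Fintype.sum_option]
  simp [wOne]
  ring

lemma restrProb_nonneg {p : ℝ} (hp0 : 0 ≤ p) (hp1 : p ≤ 1)
    (E : (ι → Option Bool) → Prop) : 0 ≤ restrProb p E := by
  rw [restrProb_eq]
  apply Finset.sum_nonneg
  intro ρ _
  split
  · exact Finset.prod_nonneg fun i _ => wOne_nonneg hp0 hp1 _
  · exact le_rfl

lemma restrProb_mono {p : ℝ} (hp0 : 0 ≤ p) (hp1 : p ≤ 1)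
    {E E' : (ι → Option Bool) → Prop} (h : ∀ ρ, E ρ → E' ρ) :
    restrProb p E ≤ restrProb p E' := by
  rw [restrProb_eq, restrProb_eq]
  apply Finset.sum_le_sum
  intro ρ _
  by_cases hE : E ρ
  · rw [if_pos hE, if_pos (h ρ hE)]
  · simp only [hE, if_false]
    split
    · exact Finset.prod_nonneg fun i _ => wOne_nonneg hp0 hp1 _
    · exact le_rfl

lemma restrProb_congr {p : ℝ} {E E' : (ι → Option Bool) → Prop}
    (h : ∀ ρ, E ρ ↔ E' ρ) : restrProb p E = restrProb p E' := by
  have : E = E' := funext fun ρ => propext (h ρ)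
  rw [this]

lemma sum_prod_wOne (p : ℝ) :
    ∑ ρ : ι → Option Bool, ∏ i : ι, wOne p (ρ i) = 1 := by
  have h : (Finset.univ : Finset (ι → Option Bool)) =
      Fintype.piFinset (fun _ : ι => (Finset.univ : Finset (Option Bool))) :=
    (Fintype.piFinset_univ).symm
  rw [h, ← Finset.prod_univ_sum]
  simp only [sum_wOne, Finset.prod_const, one_pow]

lemma restrProb_le_one {p : ℝ} (hp0 : 0 ≤ p) (hp1 : p ≤ 1)
    (E : (ι → Option Bool) → Prop) : restrProb p E ≤ 1 := by
  rw [restrProb_eq, ← sum_prod_wOne (ι := ι) p]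
  apply Finset.sum_le_sum
  intro ρ _
  split
  · exact le_rfl
  · exact Finset.prod_nonneg fun i _ => wOne_nonneg hp0 hp1 _

lemma restrProb_or_le {p : ℝ} (hp0 : 0 ≤ p) (hp1 : p ≤ 1)
    (E E' : (ι → Option Bool) → Prop) :
    restrProb p (fun ρ => E ρ ∨ E' ρ) ≤ restrProb p E + restrProb p E' := by
  rw [restrProb_eq, restrProb_eq, restrProb_eq, ← Finset.sum_add_distrib]
  apply Finset.sum_le_sum
  intro ρ _
  have hw : 0 ≤ ∏ i : ι, wOne p (ρ i) :=
    Finset.prod_nonneg fun i _ => wOne_nonneg hp0 hp1 _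
  by_cases hE : E ρ
  · simp only [hE, true_or, if_true]
    by_cases hE' : E' ρ <;> simp [hE', hw]
  · by_cases hE' : E' ρ <;> simp [hE, hE', hw]

lemma restrProb_cond (p : ℝ) (i : ι) (E : (ι → Option Bool) → Prop) :
    restrProb p E =
      ∑ c : Option Bool, wOne p c * restrProb p (fun ρ => E (Function.update ρ i c)) := by
  classical
  set e := Equiv.funSplitAt i (Option Bool) with he
  have hsymm_at : ∀ (c : Option Bool) (σ : {j // j ≠ i} → Option Bool),
      e.symm (c, σ) i = c := by
    intro c σ
    simp [he, Equiv.funSplitAt_symm_apply]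
  have hsymm_ne : ∀ (c : Option Bool) (σ : {j // j ≠ i} → Option Bool)
      (j : {j // j ≠ i}), e.symm (c, σ) (j : ι) = σ j := by
    intro c σ j
    simp [he, Equiv.funSplitAt_symm_apply, j.2]
  have hupdate : ∀ (c c' : Option Bool) (σ : {j // j ≠ i} → Option Bool),
      Function.update (e.symm (c', σ)) i c = e.symm (c, σ) := by
    intro c c' σ
    funext j
    by_cases hj : j = i
    · subst hj
      rw [Function.update_self, hsymm_at]
    · rw [Function.update_of_ne hj, hsymm_ne c' σ ⟨j, hj⟩, hsymm_ne c σ ⟨j, hj⟩]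
  have prod_split : ∀ ρ : ι → Option Bool,
      (∏ j : ι, wOne p (ρ j)) = wOne p (ρ i) * ∏ j : {j // j ≠ i}, wOne p (ρ (j : ι)) := by
    intro ρ
    rw [Fintype.prod_eq_mul_prod_compl i]
    congr 1
    exact Finset.prod_subtype _ (by simp) _
  -- abbreviation for the inner sums
  set G : Option Bool → ℝ := fun c => ∑ σ : {j // j ≠ i} → Option Bool,
      (if E (e.symm (c, σ)) then ∏ j : {j // j ≠ i}, wOne p (σ j) else 0) with hG
  have hstep : ∀ (F : (ι → Option Bool) → Prop),
      restrProb p F = ∑ c : Option Bool, ∑ σ : {j // j ≠ i} → Option Bool,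
        (if F (e.symm (c, σ)) then wOne p c * ∏ j : {j // j ≠ i}, wOne p (σ j) else 0) := by
    intro F
    rw [restrProb_eq, ← Equiv.sum_comp e.symm
      (fun ρ => if F ρ then ∏ j : ι, wOne p (ρ j) else 0), Fintype.sum_prod_type]
    apply Finset.sum_congr rfl
    intro c _
    apply Finset.sum_congr rfl
    intro σ _
    rw [prod_split, hsymm_at]
    have hpr : (∏ j : {j // j ≠ i}, wOne p (e.symm (c, σ) (j : ι))) =
        ∏ j : {j // j ≠ i}, wOne p (σ j) :=
      Finset.prod_congr rfl fun j _ => by rw [hsymm_ne]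
    rw [hpr]
  have hE : restrProb p E = ∑ c : Option Bool, wOne p c * G c := by
    rw [hstep E]
    apply Finset.sum_congr rfl
    intro c _
    rw [hG, Finset.mul_sum]
    apply Finset.sum_congr rfl
    intro σ _
    rw [mul_ite, mul_zero]
  have hEc : ∀ c : Option Bool, restrProb p (fun ρ => E (Function.update ρ i c)) = G c := by
    intro c
    rw [hstep]
    have : ∀ c' : Option Bool, ∑ σ : {j // j ≠ i} → Option Bool,
        (if E (Function.update (e.symm (c', σ)) i c) then
          wOne p c' * ∏ j : {j // j ≠ i}, wOne p (σ j) else 0) = wOne p c' * G c := by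
      intro c'
      rw [hG, Finset.mul_sum]
      apply Finset.sum_congr rfl
      intro σ _
      rw [hupdate, mul_ite, mul_zero]
    calc ∑ c' : Option Bool, ∑ σ : {j // j ≠ i} → Option Bool,
        (if E (Function.update (e.symm (c', σ)) i c) then
          wOne p c' * ∏ j : {j // j ≠ i}, wOne p (σ j) else 0)
        = ∑ c' : Option Bool, wOne p c' * G c := Finset.sum_congr rfl fun c' _ => this c'
      _ = (∑ c' : Option Bool, wOne p c') * G c := by rw [Finset.sum_mul]
      _ = G c := by rw [sum_wOne, one_mul]
  rw [hE]
  apply Finset.sum_congr rfl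
  intro c _
  rw [hEc c]

end Prob

/-! ## The sequence `A_m` and the main induction -/

noncomputable def Aseq (t m : ℕ) : ℝ := 2 ^ (t + 1) - 2 ^ (t + 1) / 2 ^ m

lemma Aseq_nonneg (t m : ℕ) : 0 ≤ Aseq t m := by
  unfold Aseq
  have h1 : (1 : ℝ) ≤ 2 ^ m := one_le_pow₀ (by norm_num)
  have h2 : (2 : ℝ) ^ (t + 1) / 2 ^ m ≤ 2 ^ (t + 1) := by
    apply div_le_self (by positivity) h1
  linarith

lemma Aseq_le (t m : ℕ) : Aseq t m ≤ 2 ^ (t + 1) := by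
  unfold Aseq
  have : (0 : ℝ) ≤ 2 ^ (t + 1) / 2 ^ m := by positivity
  linarith

lemma Aseq_mono (t : ℕ) {m m' : ℕ} (h : m ≤ m') : Aseq t m ≤ Aseq t m' := by
  unfold Aseq
  have hh : (2 : ℝ) ^ (t + 1) / 2 ^ m' ≤ 2 ^ (t + 1) / 2 ^ m := by
    gcongr
    exact one_le_two
  linarith

lemma Aseq_succ (t k : ℕ) : Aseq t (k + 1) = 1 + (Aseq t k + Aseq t t) / 2 := by
  unfold Aseq
  have h1 : (2 : ℝ) ^ t ≠ 0 := by positivity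
  have h2 : (2 : ℝ) ^ k ≠ 0 := by positivity
  rw [pow_succ, pow_succ]
  field_simp
  ring

lemma depth_restrict_bound {ι : Type} [Fintype ι] [DecidableEq ι] {t : ℕ} {p : ℝ}
    (hp0 : 0 ≤ p) (hp1 : p ≤ 1) :
    ∀ T : DTree ι, T.Clipped t → ∀ seen : List ι, T.ReadOnceFrom seen → ∀ e : ℕ,
      restrProb p (fun ρ => e + 1 ≤ (T.restrict ρ).depth) ≤
        Aseq t T.minLeafDepth * p * (4 * p * 2 ^ t) ^ e := by
  have hK0 : (0 : ℝ) ≤ 4 * p * 2 ^ t := by positivity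
  intro T
  induction T with
  | leaf b =>
    intro _ seen _ e
    have h0 : restrProb p
        (fun ρ : ι → Option Bool => e + 1 ≤ ((DTree.leaf b : DTree ι).restrict ρ).depth) = 0 := by
      rw [restrProb_eq]
      apply Finset.sum_eq_zero
      intro ρ _
      simp [DTree.restrict, DTree.depth]
    rw [h0]
    exact mul_nonneg (mul_nonneg (Aseq_nonneg t _) hp0) (pow_nonneg hK0 e)
  | node i t0 t1 ih0 ih1 =>
    intro hcl seen hro e
    obtain ⟨hmin, hcl0, hcl1⟩ := hcl
    obtain ⟨hi, hro0, hro1⟩ := hro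
    have hi0 : i ∉ t0.nodeVars := DTree.not_mem_nodeVars hro0 i List.mem_cons_self
    have hi1 : i ∉ t1.nodeVars := DTree.not_mem_nodeVars hro1 i List.mem_cons_self
    set m0 := t0.minLeafDepth with hm0
    set m1 := t1.minLeafDepth with hm1
    have hm0t : m0 ≤ t := DTree.minLeafDepth_le_of_clipped hcl0
    have hm1t : m1 ≤ t := DTree.minLeafDepth_le_of_clipped hcl1
    set K : ℝ := 4 * p * 2 ^ t with hK
    set D0 : (ι → Option Bool) → ℕ := fun ρ => (t0.restrict ρ).depth with hD0
    set D1 : (ι → Option Bool) → ℕ := fun ρ => (t1.restrict ρ).depth with hD1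
    -- the restricted tree under each conditioning
    have hrnone : ∀ ρ : ι → Option Bool,
        (DTree.node i t0 t1).restrict (Function.update ρ i none) =
          DTree.node i (t0.restrict ρ) (t1.restrict ρ) := by
      intro ρ
      simp only [DTree.restrict, Function.update_self]
      rw [DTree.restrict_update none ρ hi0, DTree.restrict_update none ρ hi1]
    have hrfalse : ∀ ρ : ι → Option Bool,
        (DTree.node i t0 t1).restrict (Function.update ρ i (some false)) = t0.restrict ρ := by
      intro ρ
      simp only [DTree.restrict, Function.update_self]
      rw [DTree.restrict_update (some false) ρ hi0]
    have hrtrue : ∀ ρ : ι → Option Bool,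
        (DTree.node i t0 t1).restrict (Function.update ρ i (some true)) = t1.restrict ρ := by
      intro ρ
      simp only [DTree.restrict, Function.update_self]
      rw [DTree.restrict_update (some true) ρ hi1]
    rw [restrProb_cond p i, Fintype.sum_option, Fintype.sum_bool]
    have hcnone : restrProb p (fun ρ : ι → Option Bool =>
        e + 1 ≤ ((DTree.node i t0 t1).restrict (Function.update ρ i none)).depth) =
        restrProb p (fun ρ => e ≤ D0 ρ ∨ e ≤ D1 ρ) := by
      apply restrProb_congr
      intro ρ
      rw [hrnone ρ]
      show e + 1 ≤ max (D0 ρ) (D1 ρ) + 1 ↔ _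
      rw [Nat.add_le_add_iff_right, le_max_iff]
    have hcfalse : restrProb p (fun ρ : ι → Option Bool =>
        e + 1 ≤ ((DTree.node i t0 t1).restrict (Function.update ρ i (some false))).depth) =
        restrProb p (fun ρ => e + 1 ≤ D0 ρ) := by
      apply restrProb_congr
      intro ρ
      rw [hrfalse ρ]
    have hctrue : restrProb p (fun ρ : ι → Option Bool =>
        e + 1 ≤ ((DTree.node i t0 t1).restrict (Function.update ρ i (some true))).depth) =
        restrProb p (fun ρ => e + 1 ≤ D1 ρ) := by
      apply restrProb_congr
      intro ρ
      rw [hrtrue ρ]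
    rw [hcnone, hcfalse, hctrue]
    -- bounds
    have B0 : restrProb p (fun ρ => e + 1 ≤ D0 ρ) ≤ Aseq t m0 * p * K ^ e :=
      ih0 hcl0 (i :: seen) hro0 e
    have B1 : restrProb p (fun ρ => e + 1 ≤ D1 ρ) ≤ Aseq t m1 * p * K ^ e :=
      ih1 hcl1 (i :: seen) hro1 e
    have Bmid : restrProb p (fun ρ => e ≤ D0 ρ ∨ e ≤ D1 ρ) ≤ K ^ e := by
      cases e with
      | zero => simpa using restrProb_le_one hp0 hp1 _
      | succ e' =>
        have h0' : restrProb p (fun ρ => e' + 1 ≤ D0 ρ) ≤ Aseq t m0 * p * K ^ e' :=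
          ih0 hcl0 (i :: seen) hro0 e'
        have h1' : restrProb p (fun ρ => e' + 1 ≤ D1 ρ) ≤ Aseq t m1 * p * K ^ e' :=
          ih1 hcl1 (i :: seen) hro1 e'
        have hsub := restrProb_or_le hp0 hp1
          (fun ρ : ι → Option Bool => e' + 1 ≤ D0 ρ) (fun ρ => e' + 1 ≤ D1 ρ)
        have hA0 : Aseq t m0 ≤ 2 ^ (t + 1) := Aseq_le t m0
        have hA1 : Aseq t m1 ≤ 2 ^ (t + 1) := Aseq_le t m1
        have hKe' : (0 : ℝ) ≤ K ^ e' := by positivity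
        have h2 : Aseq t m0 * p * K ^ e' + Aseq t m1 * p * K ^ e' ≤ K ^ (e' + 1) := by
          have : K ^ (e' + 1) = (4 * 2 ^ t) * p * K ^ e' := by rw [pow_succ, hK]; ring
          rw [this]
          have h4 : (2 : ℝ) ^ (t + 1) + 2 ^ (t + 1) = 4 * 2 ^ t := by rw [pow_succ]; ring
          nlinarith [mul_nonneg hp0 hKe']
        calc restrProb p (fun ρ => e' + 1 ≤ D0 ρ ∨ e' + 1 ≤ D1 ρ)
            ≤ restrProb p (fun ρ => e' + 1 ≤ D0 ρ) + restrProb p (fun ρ => e' + 1 ≤ D1 ρ) := hsub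
          _ ≤ Aseq t m0 * p * K ^ e' + Aseq t m1 * p * K ^ e' := add_le_add h0' h1'
          _ ≤ K ^ (e' + 1) := h2
    -- combine
    have hq0 : (0 : ℝ) ≤ (1 - p) / 2 := by linarith
    have hq2 : (1 - p) / 2 ≤ 1 / 2 := by linarith
    have hKe : (0 : ℝ) ≤ K ^ e := by positivity
    have hRn0 : 0 ≤ restrProb p (fun ρ => e ≤ D0 ρ ∨ e ≤ D1 ρ) := restrProb_nonneg hp0 hp1 _
    have hR00 : 0 ≤ restrProb p (fun ρ => e + 1 ≤ D0 ρ) := restrProb_nonneg hp0 hp1 _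
    have hR10 : 0 ≤ restrProb p (fun ρ => e + 1 ≤ D1 ρ) := restrProb_nonneg hp0 hp1 _
    have hAsum : Aseq t m0 + Aseq t m1 ≤ Aseq t (min m0 m1) + Aseq t t := by
      rcases le_total m0 m1 with h | h
      · rw [min_eq_left h]
        exact add_le_add le_rfl (Aseq_mono t hm1t)
      · rw [min_eq_right h]
        have := Aseq_mono t hm0t
        linarith
    have hfinal : wOne p none * restrProb p (fun ρ => e ≤ D0 ρ ∨ e ≤ D1 ρ) +
        (wOne p (some true) * restrProb p (fun ρ => e + 1 ≤ D1 ρ) +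
         wOne p (some false) * restrProb p (fun ρ => e + 1 ≤ D0 ρ)) ≤
        Aseq t (min m0 m1 + 1) * p * K ^ e := by
      have hw : wOne p none = p := rfl
      have hwt : wOne p (some true) = (1 - p) / 2 := rfl
      have hwf : wOne p (some false) = (1 - p) / 2 := rfl
      rw [hw, hwt, hwf, Aseq_succ]
      have e1 : p * restrProb p (fun ρ => e ≤ D0 ρ ∨ e ≤ D1 ρ) ≤ p * K ^ e :=
        mul_le_mul_of_nonneg_left Bmid hp0
      have e2 : (1 - p) / 2 * restrProb p (fun ρ => e + 1 ≤ D1 ρ) ≤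
          (1 - p) / 2 * (Aseq t m1 * p * K ^ e) := mul_le_mul_of_nonneg_left B1 hq0
      have e3 : (1 - p) / 2 * restrProb p (fun ρ => e + 1 ≤ D0 ρ) ≤
          (1 - p) / 2 * (Aseq t m0 * p * K ^ e) := mul_le_mul_of_nonneg_left B0 hq0
      have hAm : 0 ≤ Aseq t m0 := Aseq_nonneg t m0
      have hAm1 : 0 ≤ Aseq t m1 := Aseq_nonneg t m1
      have hAmin : 0 ≤ Aseq t (min m0 m1) := Aseq_nonneg t _
      have hAt : 0 ≤ Aseq t t := Aseq_nonneg t t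
      have key : (1 - p) / 2 * (Aseq t m1 * p * K ^ e) +
          (1 - p) / 2 * (Aseq t m0 * p * K ^ e) ≤
          (Aseq t (min m0 m1) + Aseq t t) / 2 * (p * K ^ e) := by
        have hpk : (0 : ℝ) ≤ p * K ^ e := mul_nonneg hp0 hKe
        have : (1 - p) / 2 * (Aseq t m0 + Aseq t m1) ≤
            (Aseq t (min m0 m1) + Aseq t t) / 2 := by
          calc (1 - p) / 2 * (Aseq t m0 + Aseq t m1)
              ≤ 1 / 2 * (Aseq t m0 + Aseq t m1) := by
                apply mul_le_mul_of_nonneg_right hq2 (by linarith)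
            _ ≤ 1 / 2 * (Aseq t (min m0 m1) + Aseq t t) := by
                apply mul_le_mul_of_nonneg_left hAsum (by norm_num)
            _ = (Aseq t (min m0 m1) + Aseq t t) / 2 := by ring
        nlinarith
      calc p * restrProb p (fun ρ => e ≤ D0 ρ ∨ e ≤ D1 ρ) +
          ((1 - p) / 2 * restrProb p (fun ρ => e + 1 ≤ D1 ρ) +
           (1 - p) / 2 * restrProb p (fun ρ => e + 1 ≤ D0 ρ)) ≤
          p * K ^ e + ((1 - p) / 2 * (Aseq t m1 * p * K ^ e) +
            (1 - p) / 2 * (Aseq t m0 * p * K ^ e)) := by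
            exact add_le_add e1 (add_le_add e2 e3)
        _ ≤ p * K ^ e + (Aseq t (min m0 m1) + Aseq t t) / 2 * (p * K ^ e) := by linarith [key]
        _ = (1 + (Aseq t (min m0 m1) + Aseq t t) / 2) * p * K ^ e := by ring
    exact hfinal

/-- switching lemma upper bound for `t`-clipped decision trees:
if `f` is computed by some `t`-clipped decision tree (`t ≥ 1`), then for a random
`p`-restriction `ρ`, `Pr_ρ[DT_depth(f|_ρ) ≥ d] ≤ (4·p·2^t)^d`. -/
theorem clipped_switching_upper_bound (n t : ℕ) (ht : 1 ≤ t)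
    (f : (Fin n → Bool) → Bool)
    (hf : ∃ T : DTree (Fin n), T.ReadOnce ∧ T.Computes f ∧ T.Clipped t)
    (p : ℝ) (hp0 : 0 ≤ p) (hp1 : p ≤ 1) (d : ℕ) :
    restrProb p (fun ρ : Fin n → Option Bool => d ≤ DTdepth (restrictFun f ρ)) ≤
      (4 * p * 2 ^ t) ^ d := by
  obtain ⟨T, hro, hcomp, hcl⟩ := hf
  cases d with
  | zero =>
    simpa using restrProb_le_one hp0 hp1
      (fun ρ : Fin n → Option Bool => 0 ≤ DTdepth (restrictFun f ρ))
  | succ e =>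
    have hmono : restrProb p
        (fun ρ : Fin n → Option Bool => e + 1 ≤ DTdepth (restrictFun f ρ)) ≤
        restrProb p (fun ρ : Fin n → Option Bool => e + 1 ≤ (T.restrict ρ).depth) := by
      apply restrProb_mono hp0 hp1
      intro ρ h
      refine le_trans h (le_trans (DTdepth_le ?_ ?_) le_rfl)
      · exact DTree.readOnceFrom_restrict ρ hro
      · exact DTree.computes_restrict hcomp ρ
    have hbound := depth_restrict_bound hp0 hp1 T hcl [] hro e
    have hfin : Aseq t T.minLeafDepth * p * (4 * p * 2 ^ t) ^ e ≤
        (4 * p * 2 ^ t) ^ (e + 1) := by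
      rw [pow_succ, mul_comm ((4 * p * 2 ^ t) ^ e)]
      apply mul_le_mul_of_nonneg_right _ (by positivity)
      calc Aseq t T.minLeafDepth * p ≤ 2 ^ (t + 1) * p :=
            mul_le_mul_of_nonneg_right (Aseq_le t _) hp0
        _ ≤ 4 * p * 2 ^ t := by rw [pow_succ]; nlinarith [pow_nonneg (by norm_num : (0:ℝ) ≤ 2) t]
    exact le_trans hmono (le_trans hbound hfin)
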